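/- Let R be a commutative ring, t ∈ R, and M an R-module such that the set {x ∈ M : t·x = 0} is finite. Set M̲ = ∩_{n≥0} t^n·M. Then t·M̲ = M̲; i.e. multiplication by t is surjective on M̲. -/
import Mathlib


/-- **Statement 13** (Claim in the final Remark of the paper).  Let `R` be a commutative
ring, `t ∈ R` and `M` an `R`-module whose `t`-torsion `{x : t·x = 0}` is a finite set.
Then multiplication by `t` is surjective on `M̲ = ⋂_{n ≥ 0} t^n·M`, i.e.
`t·M̲ = M̲`. -/
theorem statement13 (R : Type*) [CommRing R] (t : R)
    (M : Type*) [AddCommGroup M] [Module R M]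
    (hfin : {x : M | t • x = 0}.Finite) :
    Submodule.map (LinearMap.lsmul R M t)
        (⨅ n : ℕ, LinearMap.range (LinearMap.lsmul R M (t ^ n)))
      = ⨅ n : ℕ, LinearMap.range (LinearMap.lsmul R M (t ^ n)) := by
  have hmem : ∀ x : M,
      x ∈ (⨅ n : ℕ, LinearMap.range (LinearMap.lsmul R M (t ^ n))) ↔
        ∀ n : ℕ, ∃ z : M, t ^ n • z = x := by
    intro x
    simp [Submodule.mem_iInf, LinearMap.mem_range, LinearMap.lsmul_apply]
  apply le_antisymm
  · rintro _ ⟨x, hx, rfl⟩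
    rw [SetLike.mem_coe, hmem] at hx
    rw [hmem]
    intro n
    obtain ⟨z, hz⟩ := hx n
    refine ⟨t • z, ?_⟩
    simp only [LinearMap.lsmul_apply, smul_smul] at *
    rw [mul_comm, ← smul_smul, hz]
  · intro x hx
    rw [hmem] at hx
    set T : ℕ → Set M := fun n => {y | t • y = x ∧ ∃ z : M, t ^ n • z = y} with hT
    have hne : ∀ n, (T n).Nonempty := by
      intro n
      obtain ⟨z, hz⟩ := hx (n + 1)
      refine ⟨t ^ n • z, ?_, ⟨z, rfl⟩⟩
      rw [smul_smul, mul_comm, ← pow_succ, hz]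
    have hanti : Antitone T := by
      apply antitone_nat_of_succ_le
      rintro n y ⟨hy, z, hz⟩
      exact ⟨hy, t • z, by rw [smul_smul, ← pow_succ, hz]⟩
    obtain ⟨y0, hy0, -⟩ := hne 0
    have hT0fin : (T 0).Finite := by
      refine (hfin.image (fun k => y0 + k)).subset ?_
      rintro y ⟨hy, -⟩
      exact ⟨y - y0, by simp [smul_sub, hy, hy0], by simp⟩
    have hTfin : ∀ n, (T n).Finite := fun n => hT0fin.subset (hanti (Nat.zero_le n))
    set c : ℕ → ℕ := fun n => (hTfin n).toFinset.card with hc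
    obtain ⟨N, hN⟩ : ∃ N, ∀ n, c N ≤ c n := by
      obtain ⟨m, ⟨N, hNm⟩, hmin⟩ := Nat.lt_wfRel.wf.has_min (Set.range c) ⟨c 0, 0, rfl⟩
      exact ⟨N, fun n => by
        rw [hNm]
        exact not_lt.mp (hmin (c n) ⟨n, rfl⟩)⟩
    have hTN : ∀ n, T N ⊆ T n := by
      intro n
      rcases le_total n N with h | h
      · exact hanti h
      · have hsub : T n ⊆ T N := hanti h
        have hcard : (hTfin N).toFinset.card ≤ (hTfin n).toFinset.card := hN n
        have : (hTfin n).toFinset = (hTfin N).toFinset :=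
          Finset.eq_of_subset_of_card_le (by simpa using hsub) hcard
        intro y hy
        have : y ∈ (hTfin n).toFinset := by rw [this]; simpa using hy
        simpa using this
    obtain ⟨y, hy⟩ := hne N
    refine ⟨y, ?_, ?_⟩
    · rw [SetLike.mem_coe, hmem]
      intro n
      exact (hTN n hy).2
    · exact (hy).1
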